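/- arXiv:1608.03451 — 3 statements merged into one kernel-verified Lean document; each statement's English description precedes it below -/
import Mathlib

section
/- For every real x ≥ 0, the one-dimensional Lebesgue constant of the symmetric interval satisfies L({γ ∈ ℤ : |γ| ≤ x}) ≥ (1/π)·max{ln(x+1), 1}. -/
/-- The one-dimensional Lebesgue constant of a finite set `Γ ⊂ ℤ`. -/
noncomputable def FL1 (Γ : Finset ℤ) : ℝ :=
  (2 * Real.pi)⁻¹ *
    ∫ t in Set.Ico (-Real.pi) Real.pi,
      ‖∑ γ ∈ Γ, Complex.exp (Complex.I * (γ : ℂ) * (t : ℂ))‖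

section Aux
open intervalIntegral Complex Finset Real

lemma piece_im (c : ℝ) (hc : c ≠ 0) (a b : ℝ) :
    (∫ t in a..b, Complex.exp (Complex.I * c * t)).im
      = (Real.cos (c*a) - Real.cos (c*b))/c := by
  have hc' : (Complex.I * c) ≠ 0 := by
    simp [Complex.I_ne_zero, Complex.ofReal_eq_zero, hc]
  rw [integral_exp_mul_complex hc']
  have e1 : Complex.I * (c:ℂ) * (b:ℂ) = ((c*b : ℝ) : ℂ) * Complex.I := by push_cast; ring
  have e2 : Complex.I * (c:ℂ) * (a:ℂ) = ((c*a : ℝ) : ℂ) * Complex.I := by push_cast; ring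
  rw [e1, e2]
  rw [Complex.div_im]
  simp only [Complex.exp_ofReal_mul_I_re, Complex.mul_im, Complex.mul_re, Complex.I_re,
    Complex.I_im, Complex.ofReal_re, Complex.ofReal_im, Complex.sub_re, Complex.sub_im,
    Complex.normSq_apply]
  field_simp
  ring

lemma gamma_im (n : ℕ) (γ : ℤ) (h1 : -(n:ℤ) ≤ γ) (h2 : γ ≤ (n:ℤ)) :
    (∫ t in (-π)..π,
        Complex.exp (Complex.I * (γ:ℂ) * t) * Complex.exp (-(Complex.I * ((n:ℝ)+1/2 : ℝ) * |t|))).im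
      = -(1/(((n:ℝ)+1/2)+(γ:ℝ)) + 1/(((n:ℝ)+1/2)-(γ:ℝ))) := by
  set N : ℝ := (n:ℝ)+1/2 with hN
  have hγn1 : (0:ℝ) ≤ (n:ℝ) + γ := by
    have : (0:ℤ) ≤ (n:ℤ) + γ := by omega
    exact_mod_cast this
  have hγn2 : (0:ℝ) ≤ (n:ℝ) - γ := by
    have : (0:ℤ) ≤ (n:ℤ) - γ := by omega
    exact_mod_cast this
  have hp1 : (0:ℝ) < N + γ := by rw [hN]; linarith
  have hp2 : (0:ℝ) < N - γ := by rw [hN]; linarith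
  have hcont : Continuous fun t : ℝ =>
      Complex.exp (Complex.I * (γ:ℂ) * t) * Complex.exp (-(Complex.I * (N:ℝ) * |t|)) := by
    fun_prop
  have hi1 : IntervalIntegrable (fun t : ℝ =>
      Complex.exp (Complex.I * (γ:ℂ) * t) * Complex.exp (-(Complex.I * (N:ℝ) * |t|)))
      MeasureTheory.volume (-π) 0 := hcont.intervalIntegrable _ _
  have hi2 : IntervalIntegrable (fun t : ℝ =>
      Complex.exp (Complex.I * (γ:ℂ) * t) * Complex.exp (-(Complex.I * (N:ℝ) * |t|)))
      MeasureTheory.volume 0 π := hcont.intervalIntegrable _ _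
  have hsplit := integral_add_adjacent_intervals hi1 hi2
  rw [← hsplit, Complex.add_im]
  have hL : (∫ t in (-π)..(0:ℝ),
      Complex.exp (Complex.I * (γ:ℂ) * t) * Complex.exp (-(Complex.I * (N:ℝ) * |t|)))
      = ∫ t in (-π)..(0:ℝ), Complex.exp (Complex.I * ((γ:ℝ) + N : ℝ) * t) := by
    apply integral_congr
    intro t ht
    rw [Set.uIcc_of_le (by linarith [Real.pi_pos] : -π ≤ (0:ℝ))] at ht
    dsimp only
    rw [_root_.abs_of_nonpos ht.2, ← Complex.exp_add]
    congr 1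
    push_cast
    ring
  have hR : (∫ t in (0:ℝ)..π,
      Complex.exp (Complex.I * (γ:ℂ) * t) * Complex.exp (-(Complex.I * (N:ℝ) * |t|)))
      = ∫ t in (0:ℝ)..π, Complex.exp (Complex.I * ((γ:ℝ) - N : ℝ) * t) := by
    apply integral_congr
    intro t ht
    rw [Set.uIcc_of_le Real.pi_pos.le] at ht
    dsimp only
    rw [_root_.abs_of_nonneg ht.1, ← Complex.exp_add]
    congr 1
    push_cast
    ring
  rw [hL, hR, piece_im _ (by linarith : ((γ:ℝ)+N) ≠ 0),
    piece_im _ (by intro h; apply hp2.ne'; linarith : ((γ:ℝ)-N) ≠ 0)]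
  have hc1 : Real.cos (((γ:ℝ)+N) * π) = 0 := by
    have : ((γ:ℝ)+N) * π = ((γ+n : ℤ):ℝ) * π + π/2 := by rw [hN]; push_cast; ring
    rw [this, Real.cos_add_pi_div_two, Real.sin_int_mul_pi]
    ring
  have hc2 : Real.cos (((γ:ℝ)-N) * π) = 0 := by
    have : ((γ:ℝ)-N) * π = ((γ-n-1 : ℤ):ℝ) * π + π/2 := by rw [hN]; push_cast; ring
    rw [this, Real.cos_add_pi_div_two, Real.sin_int_mul_pi]
    ring
  rw [show ((γ:ℝ)+N) * -π = -(((γ:ℝ)+N) * π) by ring, Real.cos_neg, hc1, hc2]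
  simp only [mul_zero, Real.cos_zero]
  rw [show ((γ:ℝ) - N) = -(N - γ) by ring, show ((γ:ℝ) + N) = N + γ by ring, div_neg]
  ring


lemma sum_half_ge_log (K : ℕ) :
    Real.log (K + 1) ≤ ∑ k ∈ Finset.range K, 1/((k:ℝ) + 1/2) := by
  have h1 := log_add_one_le_harmonic K
  have h2 : ((harmonic K : ℚ) : ℝ) = ∑ k ∈ Finset.range K, 1/((k:ℝ) + 1) := by
    rw [harmonic]
    push_cast
    simp [one_div]
  have h3 : ∑ k ∈ Finset.range K, 1/((k:ℝ) + 1) ≤ ∑ k ∈ Finset.range K, 1/((k:ℝ) + 1/2) := by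
    apply Finset.sum_le_sum
    intro k _
    have hk : (0:ℝ) < (k:ℝ) + 1/2 := by positivity
    apply one_div_le_one_div_of_le hk
    linarith
  calc Real.log (K + 1) = Real.log ((K:ℕ)+1 : ℕ) := by push_cast; ring_nf
    _ ≤ ((harmonic K : ℚ) : ℝ) := h1
    _ = _ := h2
    _ ≤ _ := h3

lemma reindex1 (n : ℕ) :
    ∑ γ ∈ Finset.Icc (-(n:ℤ)) n, 1/(((n:ℝ) + 1/2) + (γ:ℝ))
      = ∑ k ∈ Finset.range (2*n+1), 1/((k:ℝ) + 1/2) := by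
  apply Finset.sum_nbij' (i := fun γ : ℤ => (γ + n).toNat) (j := fun k : ℕ => (k:ℤ) - n)
  · intro a ha
    simp only [Finset.mem_Icc] at ha
    simp only [Finset.mem_range]
    omega
  · intro a ha
    simp only [Finset.mem_range] at ha
    simp only [Finset.mem_Icc]
    omega
  · intro a ha
    simp only [Finset.mem_Icc] at ha
    omega
  · intro a ha
    simp only [Finset.mem_range] at ha
    omega
  · intro a ha
    simp only [Finset.mem_Icc] at ha
    congr 1
    have : ((a + n).toNat : ℤ) = a + n := Int.toNat_of_nonneg (by omega)
    have h2 : (((a + n).toNat : ℤ) : ℝ) = ((a:ℝ) + n) := by rw [this]; push_cast; ring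
    push_cast at h2 ⊢
    linarith

lemma reindex2 (n : ℕ) :
    ∑ γ ∈ Finset.Icc (-(n:ℤ)) n, 1/(((n:ℝ) + 1/2) - (γ:ℝ))
      = ∑ k ∈ Finset.range (2*n+1), 1/((k:ℝ) + 1/2) := by
  apply Finset.sum_nbij' (i := fun γ : ℤ => (n - γ).toNat) (j := fun k : ℕ => (n:ℤ) - k)
  · intro a ha
    simp only [Finset.mem_Icc] at ha
    simp only [Finset.mem_range]
    omega
  · intro a ha
    simp only [Finset.mem_range] at ha
    simp only [Finset.mem_Icc]
    omega
  · intro a ha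
    simp only [Finset.mem_Icc] at ha
    omega
  · intro a ha
    simp only [Finset.mem_range] at ha
    omega
  · intro a ha
    simp only [Finset.mem_Icc] at ha
    congr 1
    have : (((n:ℤ) - a).toNat : ℤ) = n - a := Int.toNat_of_nonneg (by omega)
    have h2 : ((((n:ℤ) - a).toNat : ℤ) : ℝ) = ((n:ℝ) - a) := by rw [this]; push_cast; ring
    push_cast at h2 ⊢
    linarith

theorem stmt_6 (x : ℝ) (hx : 0 ≤ x) :
    (1 / Real.pi) * max (Real.log (x + 1)) 1 ≤
      FL1 (Finset.Icc (-⌊x⌋) ⌊x⌋) := by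
  have hπ := Real.pi_pos
  obtain ⟨n, hn⟩ : ∃ n : ℕ, ⌊x⌋ = (n:ℤ) :=
    ⟨⌊x⌋.toNat, (Int.toNat_of_nonneg (Int.floor_nonneg.mpr hx)).symm⟩
  have hxn : x < (n:ℝ) + 1 := by
    have := Int.lt_floor_add_one x
    rw [hn] at this
    exact_mod_cast this
  set N : ℝ := (n:ℝ) + 1/2 with hN
  set g : ℝ → ℂ := fun t => Complex.exp (-(Complex.I * (N:ℝ) * |t|)) with hg
  have hgabs : ∀ t : ℝ, ‖g t‖ = 1 := by
    intro t
    rw [hg]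
    simp [Complex.norm_exp]
  unfold FL1
  set S : ℝ → ℂ := fun t : ℝ =>
    ∑ γ ∈ Finset.Icc (-⌊x⌋) ⌊x⌋, Complex.exp (Complex.I * (γ:ℂ) * t) with hS
  set R : ℝ := ∑ k ∈ Finset.range (2*n+1), 1/((k:ℝ) + 1/2) with hR
  have him : (∫ t in (-π)..π, S t * g t).im = -(2*R) := by
    have hrw : ∀ t : ℝ, S t * g t
        = ∑ γ ∈ Finset.Icc (-⌊x⌋) ⌊x⌋, (Complex.exp (Complex.I * (γ:ℂ) * t) * g t) :=
      fun t => Finset.sum_mul _ _ _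
    simp_rw [hrw]
    rw [intervalIntegral.integral_finset_sum]
    · rw [Complex.im_sum]
      have hterm : ∀ γ ∈ Finset.Icc (-⌊x⌋) ⌊x⌋,
          (∫ t in (-π)..π, Complex.exp (Complex.I * (γ:ℂ) * t) * g t).im
            = -(1/(N+(γ:ℝ)) + 1/(N-(γ:ℝ))) := by
        intro γ hγ
        rw [Finset.mem_Icc, hn] at hγ
        exact gamma_im n γ hγ.1 hγ.2
      rw [Finset.sum_congr rfl hterm, hn]
      rw [show (∑ γ ∈ Finset.Icc (-(n:ℤ)) n, -(1/(N+(γ:ℝ)) + 1/(N-(γ:ℝ))))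
          = -((∑ γ ∈ Finset.Icc (-(n:ℤ)) n, 1/(N+(γ:ℝ)))
             + (∑ γ ∈ Finset.Icc (-(n:ℤ)) n, 1/(N-(γ:ℝ)))) by
        rw [← Finset.sum_add_distrib, ← Finset.sum_neg_distrib]]
      rw [hN, reindex1, reindex2, hR]
      ring
    · intro γ _
      apply Continuous.intervalIntegrable
      fun_prop
  have hiabs : 2*R ≤ ∫ t in Set.Ico (-π) π, ‖S t‖ := by
    have step1 : (∫ t in Set.Ico (-π) π, ‖S t‖)
        = ∫ t in Set.Ico (-π) π, ‖S t * g t‖ := by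
      refine MeasureTheory.setIntegral_congr_fun measurableSet_Ico (fun t _ => ?_)
      rw [norm_mul, hgabs, mul_one]
    have step2 : ‖∫ t in Set.Ico (-π) π, S t * g t‖
        ≤ ∫ t in Set.Ico (-π) π, ‖S t * g t‖ :=
      MeasureTheory.norm_integral_le_integral_norm _
    have step3 : (∫ t in Set.Ico (-π) π, S t * g t) = ∫ t in (-π)..π, S t * g t := by
      rw [intervalIntegral.integral_of_le (by linarith)]
      exact MeasureTheory.setIntegral_congr_set MeasureTheory.Ico_ae_eq_Ioc
    have step4 : 2*R ≤ ‖∫ t in (-π)..π, S t * g t‖ := by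
      calc 2*R ≤ |(∫ t in (-π)..π, S t * g t).im| := by
            rw [him, abs_neg]; exact le_abs_self _
        _ ≤ ‖_‖ := Complex.abs_im_le_norm _
    rw [step1]
    rw [step3] at step2
    linarith
  have hRlog : Real.log (x+1) ≤ R := by
    have h1 : Real.log (x+1) ≤ Real.log ((2*n+1 : ℕ) + 1) := by
      apply Real.log_le_log (by linarith)
      push_cast
      linarith
    exact h1.trans (sum_half_ge_log (2*n+1))
  have hR1 : (1:ℝ) ≤ R := by
    have h0 : (1:ℝ)/((0:ℕ) + 1/2) ≤ R := by
      apply Finset.single_le_sum (f := fun k : ℕ => 1/((k:ℝ) + 1/2))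
      · intro i _
        positivity
      · exact Finset.mem_range.mpr (by omega)
    norm_num at h0
    linarith
  have hmax : max (Real.log (x+1)) 1 ≤ R := max_le hRlog hR1
  calc (1 / Real.pi) * max (Real.log (x + 1)) 1
      ≤ (1 / Real.pi) * R := by
        apply mul_le_mul_of_nonneg_left hmax
        positivity
    _ = (2 * Real.pi)⁻¹ * (2*R) := by
        rw [mul_inv]
        field_simp
    _ ≤ (2 * Real.pi)⁻¹ * ∫ t in Set.Ico (-π) π, ‖S t‖ := by
        apply mul_le_mul_of_nonneg_left hiabs
        positivity

end Aux
end

section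
/- Let d ≥ 2, m ∈ ℕ^d, and set Γ̄^{(m)} = {γ ∈ ℕ₀^d : γ_i/m_i ≤ 1 ∀i, γ_i/m_i + γ_j/m_j ≤ 1 ∀ i≠j}, Γ₀ = {γ ∈ ℕ₀^d : 2γ_i ≤ m_i ∀i}, Γ₁ = {γ ∈ ℕ₀^d : 2γ_i < m_i ∀i}. For nonempty K ⊆ {1,…,d} let Γ₁^K = {γ ∈ Γ₁ : K equals the set of indices i achieving max_j γ_j/m_j}, and for k ∈ {1,…,d} let s_k(γ) be γ with its k-th coordinate replaced by m_k − γ_k. Then Γ̄^{(m)} is the disjoint union of Γ₀ and the sets s_k(Γ₁^K) over all nonempty K ⊆ {1,…,d} and all k ∈ K. -/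
/-- The polyhedral set `Γ̄^{(m)}` as a subset of `ℕ₀^d`. -/
def GammaBarS (d : ℕ) (m : Fin d → ℕ) : Set (Fin d → ℕ) :=
  {γ | (∀ i, (γ i : ℝ) / (m i) ≤ 1) ∧
    ∀ i j, i ≠ j → (γ i : ℝ) / (m i) + (γ j : ℝ) / (m j) ≤ 1}

/-- `Γ₀ = {γ : 2γᵢ ≤ mᵢ ∀ i}`. -/
def Gamma0 (d : ℕ) (m : Fin d → ℕ) : Set (Fin d → ℕ) := {γ | ∀ i, 2 * γ i ≤ m i}

/-- `Γ₁ = {γ : 2γᵢ < mᵢ ∀ i}`. -/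
def Gamma1 (d : ℕ) (m : Fin d → ℕ) : Set (Fin d → ℕ) := {γ | ∀ i, 2 * γ i < m i}

/-- The set of indices achieving `max_j γ_j/m_j`. -/
def maxIdx (d : ℕ) (m : Fin d → ℕ) (γ : Fin d → ℕ) : Set (Fin d) :=
  {i | ∀ j, (γ j : ℝ) / (m j) ≤ (γ i : ℝ) / (m i)}

/-- `Γ₁^K`. -/
def Gamma1K (d : ℕ) (m : Fin d → ℕ) (K : Set (Fin d)) : Set (Fin d → ℕ) :=
  {γ ∈ Gamma1 d m | maxIdx d m γ = K}

/-- The reflection `s_k` replacing the `k`-th coordinate `γ_k` by `m_k - γ_k`. -/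
def refl' (d : ℕ) (m : Fin d → ℕ) (k : Fin d) (γ : Fin d → ℕ) : Fin d → ℕ :=
  Function.update γ k (m k - γ k)


lemma nat_div_le_one {a b : ℕ} (hb : 0 < b) : (a : ℝ) / b ≤ 1 ↔ a ≤ b := by
  rw [div_le_one (by exact_mod_cast hb)]
  exact_mod_cast Iff.rfl

lemma nat_div_add_div {a b c e : ℕ} (hb : 0 < b) (he : 0 < e) :
    (a : ℝ) / b + (c : ℝ) / e ≤ 1 ↔ a * e + c * b ≤ b * e := by
  have hb' : (0:ℝ) < b := by exact_mod_cast hb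
  have he' : (0:ℝ) < e := by exact_mod_cast he
  rw [div_add_div _ _ (ne_of_gt hb') (ne_of_gt he'), div_le_one (by positivity),
    mul_comm (b:ℝ) (c:ℝ)]
  exact_mod_cast Iff.rfl

lemma nat_div_le_div {a b c e : ℕ} (hb : 0 < b) (he : 0 < e) :
    (a : ℝ) / b ≤ (c : ℝ) / e ↔ a * e ≤ c * b := by
  have hb' : (0:ℝ) < b := by exact_mod_cast hb
  have he' : (0:ℝ) < e := by exact_mod_cast he
  rw [div_le_div_iff₀ hb' he']
  exact_mod_cast Iff.rfl

lemma mem_gammaBar {d : ℕ} {m : Fin d → ℕ} (hm : ∀ i, 0 < m i) {γ : Fin d → ℕ} :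
    γ ∈ GammaBarS d m ↔
      (∀ i, γ i ≤ m i) ∧ ∀ i j, i ≠ j → γ i * m j + γ j * m i ≤ m i * m j := by
  unfold GammaBarS
  simp only [Set.mem_setOf_eq]
  constructor <;> rintro ⟨h1, h2⟩ <;> refine ⟨fun i => ?_, fun i j hij => ?_⟩
  · exact (nat_div_le_one (hm i)).1 (h1 i)
  · exact (nat_div_add_div (hm i) (hm j)).1 (h2 i j hij)
  · exact (nat_div_le_one (hm i)).2 (h1 i)
  · exact (nat_div_add_div (hm i) (hm j)).2 (h2 i j hij)

lemma mem_maxIdx {d : ℕ} {m : Fin d → ℕ} (hm : ∀ i, 0 < m i) {γ : Fin d → ℕ} {i : Fin d} :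
    i ∈ maxIdx d m γ ↔ ∀ j, γ j * m i ≤ γ i * m j := by
  unfold maxIdx
  simp only [Set.mem_setOf_eq]
  constructor <;> intro h j
  · exact (nat_div_le_div (hm j) (hm i)).1 (h j)
  · exact (nat_div_le_div (hm j) (hm i)).2 (h j)

theorem stmt_9 (d : ℕ) (hd : 2 ≤ d) (m : Fin d → ℕ) (hm : ∀ i, 0 < m i) :
    (GammaBarS d m =
      Gamma0 d m ∪
        ⋃ K ∈ {K : Set (Fin d) | K.Nonempty}, ⋃ k ∈ K,
          refl' d m k '' Gamma1K d m K) ∧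
    (∀ K : Set (Fin d), K.Nonempty → ∀ k ∈ K,
      Disjoint (Gamma0 d m) (refl' d m k '' Gamma1K d m K)) ∧
    (∀ K K' : Set (Fin d), K.Nonempty → K'.Nonempty → ∀ k ∈ K, ∀ k' ∈ K',
      (K, k) ≠ (K', k') →
        Disjoint (refl' d m k '' Gamma1K d m K) (refl' d m k' '' Gamma1K d m K')) := by
  constructor
  · ext γ
    simp only [Set.mem_union, Set.mem_iUnion, Set.mem_setOf_eq, Set.mem_image, exists_prop]
    constructor
    · intro hγ
      rw [mem_gammaBar hm] at hγ
      obtain ⟨h1, h2⟩ := hγ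
      by_cases h0 : ∀ i, 2 * γ i ≤ m i
      · exact Or.inl h0
      · push_neg at h0
        obtain ⟨k, hk⟩ := h0
        right
        set γ' := refl' d m k γ with hγ'def
        have hγ'k : γ' k = m k - γ k := Function.update_self ..
        have hγ'j : ∀ j, j ≠ k → γ' j = γ j := fun j hj => Function.update_of_ne hj ..
        have hjk : ∀ j, j ≠ k → 2 * γ j < m j := by
          intro j hj
          have hp := h2 j k hj
          have h2k : m k < 2 * γ k := hk
          have hmk := hm k
          have hmj := hm j
          have hkey : (2 * γ j) * m k < m j * m k := by nlinarith
          exact lt_of_mul_lt_mul_right hkey (Nat.zero_le _)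
        have hΓ1 : γ' ∈ Gamma1 d m := by
          intro j
          by_cases hj : j = k
          · subst hj
            rw [hγ'k]
            have := h1 j
            omega
          · rw [hγ'j j hj]
            exact hjk j hj
        have hkmax : k ∈ maxIdx d m γ' := by
          rw [mem_maxIdx hm]
          intro j
          by_cases hj : j = k
          · subst hj; exact le_rfl
          · rw [hγ'j j hj, hγ'k]
            have hp := h2 j k hj
            have hle : γ k ≤ m k := h1 k
            zify [hle]
            nlinarith
        refine ⟨maxIdx d m γ', ⟨k, hkmax⟩, k, hkmax, γ', ⟨hΓ1, rfl⟩, ?_⟩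
        funext j
        by_cases hj : j = k
        · subst hj
          have : refl' d m j γ' j = m j - γ' j := Function.update_self ..
          rw [this, hγ'k]
          have := h1 j
          omega
        · have : refl' d m k γ' j = γ' j := Function.update_of_ne hj ..
          rw [this, hγ'j j hj]
    · rintro (h0 | ⟨K, hKne, k, hkK, γ0, ⟨hΓ1, hmaxeq⟩, rfl⟩)
      · rw [mem_gammaBar hm]
        refine ⟨fun i => by have := h0 i; omega, fun i j hij => ?_⟩
        have hi := h0 i
        have hj := h0 j
        nlinarith
      · subst hmaxeq
        rw [mem_maxIdx hm] at hkK
        rw [mem_gammaBar hm]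
        have hek : refl' d m k γ0 k = m k - γ0 k := Function.update_self ..
        have hej : ∀ j, j ≠ k → refl' d m k γ0 j = γ0 j := fun j hj =>
          Function.update_of_ne hj ..
        have hlt : ∀ i, 2 * γ0 i < m i := hΓ1
        constructor
        · intro i
          by_cases hi : i = k
          · subst hi; rw [hek]; omega
          · rw [hej i hi]; have := hlt i; omega
        · intro i j hij
          by_cases hi : i = k
          · subst hi
            rw [hek, hej j hij.symm]
            have hmax := hkK j
            have hle : γ0 i ≤ m i := le_of_lt (by have := hlt i; omega)
            zify [hle]
            nlinarith
          · by_cases hj : j = k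
            · subst hj
              rw [hek, hej i hi]
              have hmax := hkK i
              have hle : γ0 j ≤ m j := le_of_lt (by have := hlt j; omega)
              zify [hle]
              nlinarith
            · rw [hej i hi, hej j hj]
              have h1 := hlt i
              have h2 := hlt j
              nlinarith
  constructor
  · rintro K hKne k hkK
    rw [Set.disjoint_left]
    rintro δ h0 ⟨γ0, ⟨hΓ1, hmaxeq⟩, rfl⟩
    have h := h0 k
    have hek : refl' d m k γ0 k = m k - γ0 k := Function.update_self ..
    rw [hek] at h
    have := hΓ1 k
    omega
  · rintro K K' hKne hK'ne k hkK k' hk'K' hne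
    rw [Set.disjoint_left]
    rintro δ ⟨γ0, ⟨h1, hmax⟩, rfl⟩ ⟨γ1, ⟨h1', hmax'⟩, heq⟩
    by_cases hkk' : k = k'
    · subst hkk'
      have hγeq : γ0 = γ1 := by
        funext j
        have hj := congr_fun heq j
        by_cases hjk : j = k
        · subst hjk
          simp only [refl', Function.update_self] at hj
          have := h1 j
          have := h1' j
          omega
        · simp only [refl', Function.update_of_ne hjk] at hj
          exact hj.symm
      exact hne (by rw [← hmax, ← hmax', hγeq])
    · have hj := congr_fun heq k
      have e1 : refl' d m k γ0 k = m k - γ0 k := Function.update_self ..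
      have e2 : refl' d m k' γ1 k = γ1 k := Function.update_of_ne hkk' ..
      rw [e1, e2] at hj
      have := h1 k
      have := h1' k
      omega
end

section
/- Let r > 0, d ≥ 2, and m ∈ ℕ^d, and let K = {i : ln((r·m_i+1)/(4e^d)) ≥ 1} be nonempty. Then there exists k ∈ K such that ∫_0^{r m_k} (1/(v+1)) ∏_{i∈K∖{k}} ln((m_i v)/(2 m_k) + 1) dv ≥ (1/|K|) ∏_{i∈K} ln((r m_i)/2 + 1). -/
open scoped Classical

set_option maxHeartbeats 1000000 in
theorem stmt_17 (d : ℕ) (hd : 2 ≤ d) (r : ℝ) (hr : 0 < r)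
    (m : Fin d → ℕ) (hm : ∀ i, 1 ≤ m i) (K : Finset (Fin d))
    (hK : K = Finset.univ.filter fun i =>
      1 ≤ Real.log ((r * m i + 1) / (4 * Real.exp d)))
    (hKne : K.Nonempty) :
    ∃ k ∈ K,
      (1 / (K.card : ℝ)) * ∏ i ∈ K, Real.log (r * m i / 2 + 1) ≤
        ∫ v in (0:ℝ)..(r * m k),
          (1 / (v + 1)) * ∏ i ∈ K.erase k, Real.log ((m i : ℝ) * v / (2 * m k) + 1) := by
  classical
  have hm1 : ∀ i, (1 : ℝ) ≤ (m i : ℝ) := fun i => by exact_mod_cast hm i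
  have hmpos : ∀ i, (0 : ℝ) < (m i : ℝ) := fun i => lt_of_lt_of_le one_pos (hm1 i)
  -- the integral as a function of k
  set I : Fin d → ℝ := fun k =>
    ∫ v in (0:ℝ)..(r * m k),
      (1 / (v + 1)) * ∏ i ∈ K.erase k, Real.log ((m i : ℝ) * v / (2 * m k) + 1) with hIdef
  obtain ⟨k, hkK, hkmax⟩ := K.exists_max_image I hKne
  refine ⟨k, hkK, ?_⟩
  -- continuity facts
  have hlogcont : ∀ i : Fin d, ContinuousOn
      (fun u : ℝ => Real.log ((m i : ℝ) * u / 2 + 1)) (Set.Icc 0 r) := by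
    intro i
    apply ContinuousOn.log
    · fun_prop
    · intro u hu
      have h0 : 0 ≤ (m i : ℝ) * u := mul_nonneg (hmpos i).le hu.1
      nlinarith
  have hprodcont : ∀ j : Fin d, ContinuousOn
      (fun u : ℝ => ∏ i ∈ K.erase j, Real.log ((m i : ℝ) * u / 2 + 1)) (Set.Icc 0 r) := by
    intro j
    exact continuousOn_finset_prod (K.erase j) fun i _ => hlogcont i
  have hquotcont : ∀ (c : ℝ), 0 < c → ContinuousOn
      (fun u : ℝ => c / (c * u + 1)) (Set.Icc 0 r) := by
    intro c hc
    apply ContinuousOn.div continuousOn_const (by fun_prop)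
    intro u hu
    have h0 : 0 ≤ c * u := mul_nonneg hc.le hu.1
    nlinarith
  have hquotcont2 : ∀ (c : ℝ), 0 < c → ContinuousOn
      (fun u : ℝ => c / 2 / (c * u / 2 + 1)) (Set.Icc 0 r) := by
    intro c hc
    apply ContinuousOn.div continuousOn_const (by fun_prop)
    intro u hu
    have h0 : 0 ≤ c * u := mul_nonneg hc.le hu.1
    nlinarith
  have huIcc : Set.uIcc (0:ℝ) r = Set.Icc 0 r := Set.uIcc_of_le hr.le
  -- integrability of the summands F j
  have hFint : ∀ j : Fin d, IntervalIntegrable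
      (fun u : ℝ => (∏ i ∈ K.erase j, Real.log ((m i : ℝ) * u / 2 + 1)) *
        ((m j : ℝ) / 2 / ((m j : ℝ) * u / 2 + 1))) MeasureTheory.volume 0 r := by
    intro j
    apply ContinuousOn.intervalIntegrable
    rw [huIcc]
    exact (hprodcont j).mul (hquotcont2 _ (hmpos j))
  have hGint : ∀ j : Fin d, IntervalIntegrable
      (fun u : ℝ => (∏ i ∈ K.erase j, Real.log ((m i : ℝ) * u / 2 + 1)) *
        ((m j : ℝ) / ((m j : ℝ) * u + 1))) MeasureTheory.volume 0 r := by
    intro j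
    apply ContinuousOn.intervalIntegrable
    rw [huIcc]
    exact (hprodcont j).mul (hquotcont _ (hmpos j))
  -- FTC : the integral of the sum of the F j is the product of logs
  have hderiv : ∀ u ∈ Set.uIcc (0:ℝ) r,
      HasDerivAt (fun u : ℝ => ∏ i ∈ K, Real.log ((m i : ℝ) * u / 2 + 1))
        (∑ j ∈ K, (∏ i ∈ K.erase j, Real.log ((m i : ℝ) * u / 2 + 1)) *
          ((m j : ℝ) / 2 / ((m j : ℝ) * u / 2 + 1))) u := by
    intro u hu
    rw [huIcc] at hu
    have h : ∀ j ∈ K, HasDerivAt (fun u : ℝ => Real.log ((m j : ℝ) * u / 2 + 1))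
        ((m j : ℝ) / 2 / ((m j : ℝ) * u / 2 + 1)) u := by
      intro j _
      have h0 : 0 ≤ (m j : ℝ) * u := mul_nonneg (hmpos j).le hu.1
      have hpos : 0 < (m j : ℝ) * u / 2 + 1 := by nlinarith
      have h1 : HasDerivAt (fun u : ℝ => (m j : ℝ) * u / 2 + 1) ((m j : ℝ) / 2) u := by
        simpa using (((hasDerivAt_id u).const_mul ((m j : ℝ))).div_const 2).add_const 1
      simpa using h1.log hpos.ne'
    have hfp := HasDerivAt.finset_prod h
    rw [Finset.prod_fn] at hfp
    simpa [smul_eq_mul] using hfp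
  have hsumint : IntervalIntegrable
      (fun u : ℝ => ∑ j ∈ K, (∏ i ∈ K.erase j, Real.log ((m i : ℝ) * u / 2 + 1)) *
        ((m j : ℝ) / 2 / ((m j : ℝ) * u / 2 + 1))) MeasureTheory.volume 0 r :=
    by
    have h := IntervalIntegrable.sum K (fun j (_ : j ∈ K) => hFint j)
    rwa [Finset.sum_fn] at h
  have hFTC := intervalIntegral.integral_eq_sub_of_hasDerivAt hderiv hsumint
  have hG0 : (∏ i ∈ K, Real.log ((m i : ℝ) * 0 / 2 + 1)) = 0 := by
    obtain ⟨i0, hi0⟩ := hKne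
    exact Finset.prod_eq_zero hi0 (by simp)
  -- split the integral of the sum
  have hsplit : (∫ u in (0:ℝ)..r, ∑ j ∈ K,
      (∏ i ∈ K.erase j, Real.log ((m i : ℝ) * u / 2 + 1)) *
        ((m j : ℝ) / 2 / ((m j : ℝ) * u / 2 + 1)))
      = ∑ j ∈ K, ∫ u in (0:ℝ)..r,
        (∏ i ∈ K.erase j, Real.log ((m i : ℝ) * u / 2 + 1)) *
          ((m j : ℝ) / 2 / ((m j : ℝ) * u / 2 + 1)) :=
    intervalIntegral.integral_finset_sum fun j _ => hFint j
  -- each summand is at most I j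
  have hstep : ∀ j ∈ K,
      (∫ u in (0:ℝ)..r, (∏ i ∈ K.erase j, Real.log ((m i : ℝ) * u / 2 + 1)) *
        ((m j : ℝ) / 2 / ((m j : ℝ) * u / 2 + 1))) ≤ I j := by
    intro j _
    have hc0 : ((m j : ℝ)) ≠ 0 := (hmpos j).ne'
    have hmono : (∫ u in (0:ℝ)..r, (∏ i ∈ K.erase j, Real.log ((m i : ℝ) * u / 2 + 1)) *
        ((m j : ℝ) / 2 / ((m j : ℝ) * u / 2 + 1)))
        ≤ ∫ u in (0:ℝ)..r, (∏ i ∈ K.erase j, Real.log ((m i : ℝ) * u / 2 + 1)) *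
          ((m j : ℝ) / ((m j : ℝ) * u + 1)) := by
      apply intervalIntegral.integral_mono_on hr.le (hFint j) (hGint j)
      intro u hu
      have h0 : 0 ≤ (m j : ℝ) * u := mul_nonneg (hmpos j).le hu.1
      have hprodnn : 0 ≤ ∏ i ∈ K.erase j, Real.log ((m i : ℝ) * u / 2 + 1) := by
        apply Finset.prod_nonneg
        intro i _
        apply Real.log_nonneg
        have h0i : 0 ≤ (m i : ℝ) * u := mul_nonneg (hmpos i).le hu.1
        nlinarith
      have hq : (m j : ℝ) / 2 / ((m j : ℝ) * u / 2 + 1) ≤ (m j : ℝ) / ((m j : ℝ) * u + 1) := by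
        have heq : (m j : ℝ) / 2 / ((m j : ℝ) * u / 2 + 1) = (m j : ℝ) / ((m j : ℝ) * u + 2) := by
          rw [div_div]
          congr 1
          ring
        rw [heq]
        apply div_le_div_of_nonneg_left (hmpos j).le (by nlinarith) (by nlinarith)
      exact mul_le_mul_of_nonneg_left hq hprodnn
    -- substitution v = (m j) * u
    have hfun : ∀ u : ℝ, (m j : ℝ) * ((1 / ((m j : ℝ) * u + 1)) *
        ∏ i ∈ K.erase j, Real.log ((m i : ℝ) * ((m j : ℝ) * u) / (2 * (m j : ℝ)) + 1))
        = (∏ i ∈ K.erase j, Real.log ((m i : ℝ) * u / 2 + 1)) *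
          ((m j : ℝ) / ((m j : ℝ) * u + 1)) := by
      intro u
      have hprod : (∏ i ∈ K.erase j, Real.log ((m i : ℝ) * ((m j : ℝ) * u) / (2 * (m j : ℝ)) + 1))
          = ∏ i ∈ K.erase j, Real.log ((m i : ℝ) * u / 2 + 1) := by
        refine Finset.prod_congr rfl fun i _ => ?_
        congr 1
        field_simp
      rw [hprod]
      ring
    have hsub : (∫ u in (0:ℝ)..r, (∏ i ∈ K.erase j, Real.log ((m i : ℝ) * u / 2 + 1)) *
        ((m j : ℝ) / ((m j : ℝ) * u + 1))) = I j := by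
      have h1 : (∫ u in (0:ℝ)..r, (∏ i ∈ K.erase j, Real.log ((m i : ℝ) * u / 2 + 1)) *
          ((m j : ℝ) / ((m j : ℝ) * u + 1)))
          = ∫ u in (0:ℝ)..r, (m j : ℝ) * ((1 / ((m j : ℝ) * u + 1)) *
            ∏ i ∈ K.erase j, Real.log ((m i : ℝ) * ((m j : ℝ) * u) / (2 * (m j : ℝ)) + 1)) := by
        refine intervalIntegral.integral_congr fun u _ => ?_
        exact (hfun u).symm
      rw [h1, intervalIntegral.integral_const_mul, ← smul_eq_mul]
      have h2 := intervalIntegral.smul_integral_comp_mul_left (a := (0:ℝ)) (b := r)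
        (f := fun v => (1 / (v + 1)) *
          ∏ i ∈ K.erase j, Real.log ((m i : ℝ) * v / (2 * (m j : ℝ)) + 1)) ((m j : ℝ))
      rw [h2, mul_zero, mul_comm ((m j : ℝ)) r]
    exact hmono.trans_eq hsub
  -- assemble the key inequality
  have hprodr : (∏ i ∈ K, Real.log (r * (m i : ℝ) / 2 + 1))
      = ∏ i ∈ K, Real.log ((m i : ℝ) * r / 2 + 1) := by
    refine Finset.prod_congr rfl fun i _ => ?_
    rw [mul_comm r ((m i : ℝ))]
  have key : (∏ i ∈ K, Real.log (r * (m i : ℝ) / 2 + 1)) ≤ ∑ j ∈ K, I j := by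
    calc (∏ i ∈ K, Real.log (r * (m i : ℝ) / 2 + 1))
        = (∏ i ∈ K, Real.log ((m i : ℝ) * r / 2 + 1))
          - ∏ i ∈ K, Real.log ((m i : ℝ) * 0 / 2 + 1) := by rw [hG0, hprodr, sub_zero]
      _ = ∫ u in (0:ℝ)..r, ∑ j ∈ K,
            (∏ i ∈ K.erase j, Real.log ((m i : ℝ) * u / 2 + 1)) *
              ((m j : ℝ) / 2 / ((m j : ℝ) * u / 2 + 1)) := hFTC.symm
      _ = ∑ j ∈ K, ∫ u in (0:ℝ)..r,
            (∏ i ∈ K.erase j, Real.log ((m i : ℝ) * u / 2 + 1)) *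
              ((m j : ℝ) / 2 / ((m j : ℝ) * u / 2 + 1)) := hsplit
      _ ≤ ∑ j ∈ K, I j := Finset.sum_le_sum hstep
  have hcard : (0:ℝ) < (K.card : ℝ) := by exact_mod_cast Finset.card_pos.mpr hKne
  have h2 : ∑ j ∈ K, I j ≤ (K.card : ℝ) * I k := by
    have := Finset.sum_le_card_nsmul K I (I k) fun x hx => hkmax x hx
    simpa [nsmul_eq_mul] using this
  have hfin : (1 / (K.card : ℝ)) * (∏ i ∈ K, Real.log (r * (m i : ℝ) / 2 + 1)) ≤ I k := by
    rw [one_div, inv_mul_le_iff₀ hcard]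
    exact key.trans h2
  exact hfin
end
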